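/- Let g be C¹ on a half-line with lim_{x→∞} x·g'(x)/g(x) = L ∈ ℝ (and g nonvanishing). Then for every real h, lim_{x→∞} g(x+h)/g(x) = 1. -/

import Mathlib

open Filter Set

/-- (Bergelson–Håland Knutson, Lemma 2.3) If `g` is C¹ on `[x₀, ∞)`, nonvanishing there,
and `x * g'(x) / g(x)` converges to a real number `L` as `x → ∞`, then for every real `h`,
`g (x + h) / g x → 1` as `x → ∞`. -/
theorem stmt2 (g : ℝ → ℝ) (x₀ L : ℝ)
    (hg : ContDiffOn ℝ 1 g (Ici x₀))
    (hne : ∀ x ∈ Ici x₀, g x ≠ 0)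
    (hlim : Tendsto (fun x => x * deriv g x / g x) atTop (nhds L)) :
    ∀ h : ℝ, Tendsto (fun x => g (x + h) / g x) atTop (nhds 1) := by
  intro h
  set φ : ℝ → ℝ := fun x => Real.log (g x) with hφdef
  set ψ : ℝ → ℝ := fun x => deriv g x / g x with hψdef
  -- g has constant sign on Ici x₀
  have hsign : ∀ a ∈ Ici x₀, ∀ b ∈ Ici x₀, 0 < g a * g b := by
    intro a ha b hb
    rcases lt_or_ge 0 (g a * g b) with h1 | h1
    · exact h1
    · exfalso
      have hsub : uIcc a b ⊆ Ici x₀ := by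
        intro t ht
        have := ht.1
        have hmin : x₀ ≤ min a b := le_min ha hb
        exact le_trans hmin this
      have hc : ContinuousOn g (uIcc a b) := hg.continuousOn.mono hsub
      have h0 : (0:ℝ) ∈ uIcc (g a) (g b) := by
        rcases mul_nonpos_iff.mp h1 with ⟨h2, h3⟩ | ⟨h2, h3⟩
        · exact Set.mem_uIcc.mpr (Or.inr ⟨h3, h2⟩)
        · exact Set.mem_uIcc.mpr (Or.inl ⟨h2, h3⟩)
      obtain ⟨c, hc1, hc2⟩ := intermediate_value_uIcc hc h0
      exact hne c (hsub hc1) hc2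
  -- ψ → 0
  have hψ0 : Tendsto ψ atTop (nhds 0) := by
    have h1 : Tendsto (fun x => (x * deriv g x / g x) * x⁻¹) atTop (nhds (L * 0)) :=
      hlim.mul tendsto_inv_atTop_zero
    rw [mul_zero] at h1
    apply h1.congr'
    filter_upwards [eventually_ge_atTop (1:ℝ)] with x hx
    have hx0 : x ≠ 0 := by linarith
    simp only [hψdef]
    rw [mul_div_assoc, mul_comm, ← mul_assoc, inv_mul_cancel₀ hx0, one_mul]
  -- derivative of φ
  have hderiv : ∀ x ∈ Ioi x₀, HasDerivAt φ (ψ x) x := by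
    intro x hx
    have hmem : Ici x₀ ∈ nhds x := Ici_mem_nhds hx
    have hd : DifferentiableAt ℝ g x :=
      (hg.differentiableOn one_ne_zero).differentiableAt hmem
    exact hd.hasDerivAt.log (hne x (mem_Ici.mpr (le_of_lt (mem_Ioi.mp hx))))
  -- key: φ (x+h) - φ x → 0
  have key : Tendsto (fun x => φ (x + h) - φ x) atTop (nhds 0) := by
    rw [NormedAddCommGroup.tendsto_nhds_zero]
    intro ε hε
    have hb : 0 < ε / (|h| + 1) := by positivity
    have hev : ∀ᶠ x in atTop, ‖ψ x‖ ≤ ε / (|h| + 1) :=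
      (NormedAddCommGroup.tendsto_nhds_zero.mp hψ0 _ hb).mono fun x hx => le_of_lt hx
    obtain ⟨M, hM⟩ := eventually_atTop.mp hev
    set c := max M (x₀ + 1) with hc
    have hconv : Convex ℝ (Ici c) := convex_Ici c
    have hder : ∀ y ∈ Ici c, HasDerivWithinAt φ (ψ y) (Ici c) y := by
      intro y hy
      have : x₀ < y := lt_of_lt_of_le (by linarith [le_max_right M (x₀+1), hy.out]) le_rfl
      exact (hderiv y this).hasDerivWithinAt
    have hbound : ∀ y ∈ Ici c, ‖ψ y‖ ≤ ε / (|h| + 1) := fun y hy =>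
      hM y (le_trans (le_max_left M (x₀+1)) hy)
    filter_upwards [eventually_ge_atTop (c + |h|)] with x hx
    have hxs : x ∈ Ici c := by
      have := abs_nonneg h; simp only [mem_Ici]; linarith
    have hxhs : x + h ∈ Ici c := by
      have := neg_abs_le h; simp only [mem_Ici]; linarith
    have hest := hconv.norm_image_sub_le_of_norm_hasDerivWithin_le hder hbound hxs hxhs
    have heq : ‖(x + h) - x‖ = |h| := by
      rw [add_sub_cancel_left, Real.norm_eq_abs]
    rw [heq] at hest
    calc ‖φ (x + h) - φ x‖ ≤ ε / (|h| + 1) * |h| := hest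
      _ < ε := by
          rw [div_mul_eq_mul_div, div_lt_iff₀ (by positivity)]
          nlinarith [abs_nonneg h]
  have hexp : Tendsto (fun x => Real.exp (φ (x + h) - φ x)) atTop (nhds 1) := by
    have := (Real.continuous_exp.tendsto 0).comp key
    simpa [Function.comp_def] using this
  apply hexp.congr'
  filter_upwards [eventually_ge_atTop (max x₀ (x₀ - h))] with x hx
  have hx1 : x₀ ≤ x := le_trans (le_max_left _ _) hx
  have hx2 : x₀ ≤ x + h := by
    have := le_trans (le_max_right _ _) hx; linarith
  have hprod := hsign (x + h) hx2 x hx1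
  have hgx : g x ≠ 0 := hne x hx1
  have hpos : 0 < g (x + h) / g x := by
    have heq2 : g (x + h) / g x = (g (x + h) * g x) / (g x)^2 := by
      field_simp
    rw [heq2]
    positivity
  simp only [hφdef]
  rw [← Real.log_div (hne _ hx2) hgx, Real.exp_log hpos]
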